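/- Let R be a commutative ring and let C be a radical divisible conservative system of R. Assume that for every prime ideal P of R belonging to C there exist a finite subset Σ ⊆ P and an element s ∈ R \ P such that P = (Σ)_C : s. Then C is noetherian, i.e. every ascending chain of C-ideals stabilizes. -/

import Mathlib

/-- The division ideal `I : s = {r ∈ R | r * s ∈ I}`. -/
def idealDiv {R : Type*} [CommRing R] (I : Ideal R) (s : R) : Ideal R where
  carrier := {r : R | r * s ∈ I}
  zero_mem' := by simp
  add_mem' := by
    intro a b ha hb
    simpa [add_mul] using I.add_mem ha hb
  smul_mem' := by
    intro c a ha
    simp only [Set.mem_setOf_eq, smul_eq_mul] at *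
    rw [mul_assoc]
    exact I.mul_mem_left c ha

/-- A conservative system of ideals of a commutative ring: a collection of ideals closed
under intersections of arbitrary subfamilies (the empty intersection being `⊤ = R`) and
under unions (suprema) of nonempty chains. -/
structure ConservativeSystem (R : Type*) [CommRing R] where
  carrier : Set (Ideal R)
  sInf_mem : ∀ S : Set (Ideal R), S ⊆ carrier → sInf S ∈ carrier
  chain_sSup_mem : ∀ S : Set (Ideal R), S ⊆ carrier → S.Nonempty →
    IsChain (· ≤ ·) S → sSup S ∈ carrier

variable {R : Type*} [CommRing R]

/-- The `C`-ideal `C`-generated by a subset `A ⊆ R`: the intersection of all `C`-ideals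
containing `A`. -/
def ConservativeSystem.gen (C : ConservativeSystem R) (A : Set R) : Ideal R :=
  sInf {I : Ideal R | I ∈ C.carrier ∧ A ⊆ (I : Set R)}

/-- A conservative system is radical if all of its members are radical ideals. -/
def ConservativeSystem.IsRadicalSystem (C : ConservativeSystem R) : Prop :=
  ∀ I ∈ C.carrier, I.IsRadical

/-- A conservative system is divisible if it is closed under division of ideals by elements. -/
def ConservativeSystem.IsDivisible (C : ConservativeSystem R) : Prop :=
  ∀ I ∈ C.carrier, ∀ s : R, idealDiv I s ∈ C.carrier

/-- A conservative system is noetherian if every ascending chain of `C`-ideals stabilizes. -/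
def ConservativeSystem.IsNoetherianSystem (C : ConservativeSystem R) : Prop :=
  ∀ f : ℕ → Ideal R, (∀ n, f n ∈ C.carrier) → Monotone f → ∃ N, ∀ n, N ≤ n → f n = f N

/-- A `C`-ideal is finitely `C`-generated if it is `C`-generated by a finite set. -/
def ConservativeSystem.FinitelyGen (C : ConservativeSystem R) (I : Ideal R) : Prop :=
  ∃ Fs : Finset R, I = C.gen (↑Fs : Set R)

namespace ConservativeSystem

variable (C : ConservativeSystem R)

lemma mem_idealDiv {I : Ideal R} {s x : R} : x ∈ idealDiv I s ↔ x * s ∈ I := Iff.rfl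

lemma gen_mem (A : Set R) : C.gen A ∈ C.carrier :=
  C.sInf_mem _ fun _ hI => hI.1

lemma subset_gen (A : Set R) : A ⊆ (C.gen A : Set R) := fun _ hx =>
  Submodule.mem_sInf.2 fun _ hI => hI.2 hx

lemma gen_le {A : Set R} {I : Ideal R} (hI : I ∈ C.carrier) (h : A ⊆ (I : Set R)) :
    C.gen A ≤ I :=
  sInf_le ⟨hI, h⟩

lemma gen_mono {A B : Set R} (h : A ⊆ B) : C.gen A ≤ C.gen B :=
  C.gen_le (C.gen_mem B) (h.trans (C.subset_gen B))

/-- Key lemma (radical + divisible): if `x ∈ (I ∪ {s})_C` and `x*s ∈ I` then `x ∈ I`. -/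
lemma mem_of_mem_gen_union (hrad : C.IsRadicalSystem) (hdiv : C.IsDivisible)
    {I : Ideal R} (hI : I ∈ C.carrier) {s x : R}
    (hx : x ∈ C.gen ((I : Set R) ∪ {s})) (hxs : x * s ∈ I) : x ∈ I := by
  have h1 : C.gen ((I : Set R) ∪ {s}) ≤ idealDiv I x := by
    apply C.gen_le (hdiv I hI x)
    rintro a (ha | ha)
    · exact I.mul_mem_right x ha
    · rw [Set.mem_singleton_iff] at ha
      subst ha
      show a * x ∈ I
      rwa [mul_comm]
  have h2 : x * x ∈ I := h1 hx
  exact hrad I hI ⟨2, by rwa [pow_two]⟩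

/-- Multiplication lemma: if all products of elements of `A` and `B` lie in the `C`-ideal `I`,
then so do all products of elements of `(A)_C` and `(B)_C`. -/
lemma mul_mem_of_gen (hdiv : C.IsDivisible) {A B : Set R} {I : Ideal R}
    (hI : I ∈ C.carrier) (hAB : ∀ a ∈ A, ∀ b ∈ B, a * b ∈ I) :
    ∀ x ∈ C.gen A, ∀ y ∈ C.gen B, x * y ∈ I := by
  have h1 : ∀ a ∈ A, C.gen B ≤ idealDiv I a := by
    intro a ha
    apply C.gen_le (hdiv I hI a)
    intro b hb
    show b * a ∈ I
    rw [mul_comm]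
    exact hAB a ha b hb
  intro x hx y hy
  have h2 : C.gen A ≤ idealDiv I y := by
    apply C.gen_le (hdiv I hI y)
    intro a ha
    show a * y ∈ I
    rw [mul_comm]
    exact h1 a ha hy
  exact h2 hx

/-- The union of all `(F)_C`, `F` a finite subset of `A`; it is an ideal by directedness. -/
def idealU (A : Set R) : Ideal R where
  carrier := {x : R | ∃ F : Finset R, (↑F : Set R) ⊆ A ∧ x ∈ C.gen (↑F : Set R)}
  zero_mem' := ⟨∅, by simp, zero_mem _⟩
  add_mem' := by
    classical
    rintro a b ⟨F₁, h₁, m₁⟩ ⟨F₂, h₂, m₂⟩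
    refine ⟨F₁ ∪ F₂, by simp [h₁, h₂, Set.union_subset_iff], ?_⟩
    have e1 : C.gen (↑F₁ : Set R) ≤ C.gen (↑(F₁ ∪ F₂) : Set R) := by
      apply C.gen_mono; rw [Finset.coe_union]; exact Set.subset_union_left
    have e2 : C.gen (↑F₂ : Set R) ≤ C.gen (↑(F₁ ∪ F₂) : Set R) := by
      apply C.gen_mono; rw [Finset.coe_union]; exact Set.subset_union_right
    exact add_mem (e1 m₁) (e2 m₂)
  smul_mem' := by
    rintro c a ⟨F, h, m⟩
    exact ⟨F, h, Submodule.smul_mem _ c m⟩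

lemma mem_idealU {A : Set R} {x : R} :
    x ∈ C.idealU A ↔ ∃ F : Finset R, (↑F : Set R) ⊆ A ∧ x ∈ C.gen (↑F : Set R) :=
  Iff.rfl

lemma idealU_mono {A B : Set R} (h : A ⊆ B) : C.idealU A ≤ C.idealU B := by
  rintro x ⟨F, hF, hx⟩
  exact ⟨F, hF.trans h, hx⟩

lemma gen_le_idealU {A : Set R} {F : Finset R} (h : (↑F : Set R) ⊆ A) :
    C.gen (↑F : Set R) ≤ C.idealU A :=
  fun _ hx => ⟨F, h, hx⟩

lemma idealU_le_gen (A : Set R) : C.idealU A ≤ C.gen A := by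
  rintro x ⟨F, hF, hx⟩
  exact C.gen_mono hF hx

open Cardinal in
/-- The fundamental finiteness property: `idealU A` is itself a `C`-ideal.  Proved by
transfinite induction on the cardinality of `A`, using closure under unions of chains. -/
lemma idealU_mem : ∀ A : Set R, C.idealU A ∈ C.carrier := by
  have main : ∀ κ : Cardinal, ∀ A : Set R, #A = κ → C.idealU A ∈ C.carrier := by
    intro κ
    induction κ using WellFoundedLT.induction with
    | _ κ IH =>
    intro A hA
    by_cases hfin : A.Finite
    · have hAeq : (hfin.toFinset : Set R) = A := hfin.coe_toFinset
      have h1 : C.gen A ≤ C.idealU A := by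
        conv_lhs => rw [← hAeq]
        exact C.gen_le_idealU (le_of_eq hAeq)
      have h2 : C.idealU A = C.gen A := le_antisymm (C.idealU_le_gen A) h1
      rw [h2]
      exact C.gen_mem A
    · have hinf : ℵ₀ ≤ #A := Cardinal.infinite_iff.1 (Set.infinite_coe_iff.2 hfin)
      obtain ⟨e⟩ : Nonempty ((#A).ord.ToType ≃ A) := by
        rw [← Cardinal.eq, Cardinal.mk_ord_toType]
      haveI : Nonempty ((#A).ord.ToType) :=
        Ordinal.toType_nonempty_iff_ne_zero.2 (Cardinal.isSuccLimit_ord hinf).ne_bot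
      haveI : NoMaxOrder ((#A).ord.ToType) := Cardinal.noMaxOrder hinf
      set Ax : (#A).ord.ToType → Set R := fun x => (fun i => (e i : R)) '' Set.Iio x with hAxdef
      have hAx_sub : ∀ x, Ax x ⊆ A := by
        rintro x _ ⟨i, _, rfl⟩
        exact (e i).2
      have hAx_card : ∀ x, #(Ax x) < #A := fun x =>
        lt_of_le_of_lt Cardinal.mk_image_le (Cardinal.mk_Iio_ord_toType x)
      set g : (#A).ord.ToType → Ideal R := fun x => C.idealU (Ax x) with hgdef
      have hg_mem : ∀ x, g x ∈ C.carrier := fun x => IH _ (hA ▸ hAx_card x) (Ax x) rfl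
      have hg_mono : Monotone g := fun x y hxy =>
        C.idealU_mono (Set.image_mono (Set.Iio_subset_Iio hxy))
      have hchain : IsChain (· ≤ ·) (Set.range g) := by
        rintro _ ⟨x, rfl⟩ _ ⟨y, rfl⟩ _
        rcases le_total x y with h | h
        · exact Or.inl (hg_mono h)
        · exact Or.inr (hg_mono h)
      have hsup_mem : sSup (Set.range g) ∈ C.carrier :=
        C.chain_sSup_mem _ (by rintro _ ⟨x, rfl⟩; exact hg_mem x) (Set.range_nonempty g) hchain
      have key : C.idealU A = sSup (Set.range g) := by
        apply le_antisymm
        · rintro z ⟨F, hFA, hzF⟩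
          classical
          set G : Finset ((#A).ord.ToType) :=
            F.attach.image (fun f => e.symm ⟨f.1, hFA f.2⟩) with hGdef
          obtain ⟨b, hb⟩ := G.exists_le
          obtain ⟨x, hxb⟩ := exists_gt b
          have hFsub : (↑F : Set R) ⊆ Ax x := by
            intro f hf
            refine ⟨e.symm ⟨f, hFA hf⟩, ?_, by simp⟩
            have hmem : e.symm ⟨f, hFA hf⟩ ∈ G :=
              Finset.mem_image.2 ⟨⟨f, hf⟩, F.mem_attach _, rfl⟩
            exact lt_of_le_of_lt (hb _ hmem) hxb
          have hgx : g x ≤ sSup (Set.range g) := le_sSup (Set.mem_range_self x)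
          exact hgx (C.gen_le_idealU hFsub hzF)
        · apply sSup_le
          rintro _ ⟨x, rfl⟩
          exact C.idealU_mono (hAx_sub x)
      rw [key]
      exact hsup_mem
  intro A
  exact main _ A rfl

lemma gen_eq_idealU (A : Set R) : C.gen A = C.idealU A := by
  refine le_antisymm (C.gen_le (C.idealU_mem A) ?_) (C.idealU_le_gen A)
  intro a ha
  refine ⟨{a}, by simpa using ha, C.subset_gen _ (by simp)⟩

/-- Finite character of generation. -/
lemma exists_finset_of_mem_gen {A : Set R} {x : R} (hx : x ∈ C.gen A) :
    ∃ F : Finset R, (↑F : Set R) ⊆ A ∧ x ∈ C.gen (↑F : Set R) := by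
  rw [C.gen_eq_idealU] at hx
  exact hx

/-- Finite character for finitely many elements at once. -/
lemma exists_finset_of_finset_subset_gen {A : Set R} (Φ : Finset R)
    (h : ∀ y ∈ Φ, y ∈ C.gen A) :
    ∃ F : Finset R, (↑F : Set R) ⊆ A ∧ ∀ y ∈ Φ, y ∈ C.gen (↑F : Set R) := by
  classical
  revert h
  induction Φ using Finset.induction with
  | empty => exact fun _ => ⟨∅, by simp, by simp⟩
  | insert _ _ hx IH =>
    rename_i a s
    intro h
    obtain ⟨F₁, hF₁, hIH⟩ := IH (fun y hy => h y (Finset.mem_insert_of_mem hy))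
    obtain ⟨F₂, hF₂, ha⟩ := C.exists_finset_of_mem_gen (h a (Finset.mem_insert_self a s))
    refine ⟨F₁ ∪ F₂, by simp [hF₁, hF₂, Set.union_subset_iff], ?_⟩
    have e1 : C.gen (↑F₁ : Set R) ≤ C.gen (↑(F₁ ∪ F₂) : Set R) := by
      apply C.gen_mono; rw [Finset.coe_union]; exact Set.subset_union_left
    have e2 : C.gen (↑F₂ : Set R) ≤ C.gen (↑(F₁ ∪ F₂) : Set R) := by
      apply C.gen_mono; rw [Finset.coe_union]; exact Set.subset_union_right
    intro y hy
    rcases Finset.mem_insert.1 hy with rfl | hy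
    · exact e2 ha
    · exact e1 (hIH y hy)

/-- In a chain, a finite set covered by members of the chain lies in a single member. -/
lemma exists_chain_mem_of_finset {c : Set (Ideal R)} (hc : IsChain (· ≤ ·) c)
    (hne : c.Nonempty) (Fs : Finset R) (h : ∀ x ∈ Fs, ∃ I ∈ c, x ∈ I) :
    ∃ I ∈ c, ∀ x ∈ Fs, x ∈ I := by
  classical
  revert h
  induction Fs using Finset.induction with
  | empty =>
    intro _
    obtain ⟨I, hI⟩ := hne
    exact ⟨I, hI, by simp⟩
  | insert _ _ hx IH =>
    rename_i a s
    intro h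
    obtain ⟨I₁, hI₁c, hI₁⟩ := IH (fun x hxs => h x (Finset.mem_insert_of_mem hxs))
    obtain ⟨I₂, hI₂c, hI₂⟩ := h a (Finset.mem_insert_self a s)
    rcases hc.total hI₁c hI₂c with hle | hle
    · refine ⟨I₂, hI₂c, ?_⟩
      intro x hxs
      rcases Finset.mem_insert.1 hxs with rfl | hxs
      · exact hI₂
      · exact hle (hI₁ x hxs)
    · refine ⟨I₁, hI₁c, ?_⟩
      intro x hxs
      rcases Finset.mem_insert.1 hxs with rfl | hxs
      · exact hle hI₂
      · exact hI₁ x hxs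

/-- A maximal non-finitely-`C`-generated `C`-ideal is prime. -/
lemma isPrime_of_maximal_nonfg (hrad : C.IsRadicalSystem) (hdiv : C.IsDivisible)
    {M : Ideal R} (hM : M ∈ C.carrier) (hnfg : ¬ C.FinitelyGen M)
    (hmax : ∀ J ∈ C.carrier, M < J → C.FinitelyGen J) : M.IsPrime := by
  classical
  constructor
  · intro htop
    apply hnfg
    refine ⟨{1}, ?_⟩
    have h1 : (1 : R) ∈ C.gen ({1} : Set R) := C.subset_gen _ rfl
    have : C.gen (({1} : Finset R) : Set R) = ⊤ := by
      rw [Ideal.eq_top_iff_one]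
      simpa using h1
    rw [htop, this]
  · intro a b hab
    by_contra hcon
    push_neg at hcon
    obtain ⟨ha, hb⟩ := hcon
    have hMa : M < C.gen ((M : Set R) ∪ {a}) := by
      refine lt_of_le_of_ne (fun x hx => C.subset_gen _ (Or.inl hx)) ?_
      intro h
      exact ha (by rw [h]; exact C.subset_gen _ (Or.inr rfl))
    have hMb : M < C.gen ((M : Set R) ∪ {b}) := by
      refine lt_of_le_of_ne (fun x hx => C.subset_gen _ (Or.inl hx)) ?_
      intro h
      exact hb (by rw [h]; exact C.subset_gen _ (Or.inr rfl))
    obtain ⟨Fa, hFa⟩ := hmax _ (C.gen_mem _) hMa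
    obtain ⟨Fb, hFb⟩ := hmax _ (C.gen_mem _) hMb
    set P : Finset R := Finset.image₂ (· * ·) Fa Fb with hPdef
    -- all products of elements of gen(M∪{a}) and gen(M∪{b}) are in M
    have hprod : ∀ x ∈ C.gen ((M : Set R) ∪ {a}), ∀ y ∈ C.gen ((M : Set R) ∪ {b}),
        x * y ∈ M := by
      apply C.mul_mem_of_gen hdiv hM
      rintro u (hu | rfl) v (hv | rfl)
      · exact M.mul_mem_right _ hu
      · exact M.mul_mem_right _ hu
      · exact M.mul_mem_left _ hv
      · exact hab
    apply hnfg
    refine ⟨P, le_antisymm ?_ ?_⟩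
    · -- M ≤ gen P
      intro m hm
      have hma : m ∈ C.gen (↑Fa : Set R) := by rw [← hFa]; exact le_of_lt hMa hm
      have hmb : m ∈ C.gen (↑Fb : Set R) := by rw [← hFb]; exact le_of_lt hMb hm
      have hmul : ∀ x ∈ C.gen (↑Fa : Set R), ∀ y ∈ C.gen (↑Fb : Set R),
          x * y ∈ C.gen (↑P : Set R) := by
        apply C.mul_mem_of_gen hdiv (C.gen_mem _)
        intro u hu v hv
        apply C.subset_gen
        exact_mod_cast Finset.mem_image₂_of_mem hu hv
      have hm2 : m * m ∈ C.gen (↑P : Set R) := hmul m hma m hmb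
      exact hrad _ (C.gen_mem _) ⟨2, by rwa [pow_two]⟩
    · -- gen P ≤ M
      apply C.gen_le hM
      intro p hp
      obtain ⟨u, hu, v, hv, rfl⟩ := Finset.mem_image₂.1 (by exact_mod_cast hp)
      refine hprod u ?_ v ?_
      · rw [hFa]
        exact C.subset_gen _ (by exact_mod_cast hu)
      · rw [hFb]
        exact C.subset_gen _ (by exact_mod_cast hv)

end ConservativeSystem

/-- Let `C` be a radical divisible conservative system of a commutative ring
`R`. If every prime `C`-ideal `P` is of the form `(Σ)_C : s` for some finite `Σ ⊆ P` and some
`s ∈ R \ P`, then `C` is noetherian. -/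
theorem isNoetherianSystem_of_prime_div (C : ConservativeSystem R)
    (hrad : C.IsRadicalSystem) (hdiv : C.IsDivisible)
    (hyp : ∀ P ∈ C.carrier, P.IsPrime →
      ∃ Fs : Finset R, (↑Fs : Set R) ⊆ (P : Set R) ∧
        ∃ s : R, s ∉ P ∧ P = idealDiv (C.gen (↑Fs : Set R)) s) :
    C.IsNoetherianSystem := by
  classical
  -- First: every C-ideal is finitely C-generated.
  have key : ∀ I ∈ C.carrier, C.FinitelyGen I := by
    by_contra hcon
    push_neg at hcon
    obtain ⟨I₀, hI₀, hI₀nfg⟩ := hcon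
    -- Zorn's lemma on the set of non-finitely-generated C-ideals
    set S : Set (Ideal R) := {I | I ∈ C.carrier ∧ ¬ C.FinitelyGen I} with hSdef
    have hzorn : ∀ c ⊆ S, IsChain (· ≤ ·) c → ∀ y ∈ c, ∃ ub ∈ S, ∀ z ∈ c, z ≤ ub := by
      intro c hcS hchain y hy
      refine ⟨sSup c, ⟨C.chain_sSup_mem c (fun I hI => (hcS hI).1) ⟨y, hy⟩ hchain, ?_⟩,
        fun z hz => le_sSup hz⟩
      rintro ⟨Fs, hFs⟩
      have hdir : DirectedOn (· ≤ ·) c := hchain.directedOn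
      have hmem : ∀ x ∈ Fs, ∃ I ∈ c, x ∈ I := by
        intro x hx
        have : x ∈ sSup c := by
          rw [hFs]
          exact C.subset_gen _ hx
        exact (Submodule.mem_sSup_of_directed ⟨y, hy⟩ hdir).1 this
      obtain ⟨I', hI'c, hI'⟩ := ConservativeSystem.exists_chain_mem_of_finset hchain ⟨y, hy⟩ Fs hmem
      have h1 : sSup c ≤ I' := by
        rw [hFs]
        exact C.gen_le (hcS hI'c).1 (fun x hx => hI' x hx)
      have h2 : I' = sSup c := le_antisymm (le_sSup hI'c) h1
      exact (hcS hI'c).2 ⟨Fs, by rw [h2, hFs]⟩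
    obtain ⟨M, -, ⟨hM, hMnfg⟩, hMmax⟩ := zorn_le_nonempty₀ S hzorn I₀ ⟨hI₀, hI₀nfg⟩
    have hmax' : ∀ J ∈ C.carrier, M < J → C.FinitelyGen J := by
      intro J hJ hlt
      by_contra hJnfg
      exact hlt.ne (le_antisymm hlt.le (hMmax ⟨hJ, hJnfg⟩ hlt.le))
    have hprime : M.IsPrime := C.isPrime_of_maximal_nonfg hrad hdiv hM hMnfg hmax'
    obtain ⟨Sg, hSgM, s, hsM, hMeq⟩ := hyp M hM hprime
    -- N = gen(M ∪ {s}) is finitely generated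
    have hMN : M < C.gen ((M : Set R) ∪ {s}) := by
      refine lt_of_le_of_ne (fun x hx => C.subset_gen _ (Or.inl hx)) ?_
      intro h
      exact hsM (by rw [h]; exact C.subset_gen _ (Or.inr rfl))
    obtain ⟨Φ, hΦ⟩ := hmax' _ (C.gen_mem _) hMN
    -- finite character: find F ⊆ M ∪ {s} finite with gen(M ∪ {s}) = gen F
    have hΦmem : ∀ y ∈ Φ, y ∈ C.gen ((M : Set R) ∪ {s}) := by
      intro y hy
      rw [hΦ]
      exact C.subset_gen _ hy
    obtain ⟨F, hFsub, hΦF⟩ := C.exists_finset_of_finset_subset_gen Φ hΦmem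
    have hNF : C.gen ((M : Set R) ∪ {s}) = C.gen (↑F : Set R) := by
      apply le_antisymm
      · rw [hΦ]
        exact C.gen_le (C.gen_mem _) (fun y hy => hΦF y hy)
      · exact C.gen_mono hFsub
    set F₁ : Finset R := F.erase s with hF₁def
    have hF₁M : (↑F₁ : Set R) ⊆ (M : Set R) := by
      intro x hx
      rcases Finset.mem_erase.1 (by exact_mod_cast hx) with ⟨hne, hxF⟩
      rcases hFsub (by exact_mod_cast hxF) with h | h
      · exact h
      · exact absurd h hne
    have hFF₁ : (↑F : Set R) ⊆ (↑F₁ : Set R) ∪ {s} := by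
      intro x hx
      by_cases hxs : x = s
      · exact Or.inr hxs
      · exact Or.inl (by exact_mod_cast Finset.mem_erase.2 ⟨hxs, by exact_mod_cast hx⟩)
    -- The finite set Sg ∪ F₁ generates M, contradiction
    apply hMnfg
    refine ⟨Sg ∪ F₁, le_antisymm ?_ ?_⟩
    · -- M ≤ gen(Sg ∪ F₁)
      intro m hm
      set G : Ideal R := C.gen (↑(Sg ∪ F₁) : Set R) with hGdef
      have hms : m * s ∈ C.gen (↑Sg : Set R) := by
        have : m ∈ idealDiv (C.gen (↑Sg : Set R)) s := by rw [← hMeq]; exact hm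
        exact this
      have hmsG : m * s ∈ G := by
        refine C.gen_mono ?_ hms
        rw [Finset.coe_union]
        exact Set.subset_union_left
      have hF₁G : (↑F₁ : Set R) ⊆ (G : Set R) := by
        intro x hx
        apply C.subset_gen
        rw [Finset.coe_union]
        exact Or.inr hx
      have hmG : m ∈ C.gen ((G : Set R) ∪ {s}) := by
        have h1 : m ∈ C.gen ((M : Set R) ∪ {s}) := C.subset_gen _ (Or.inl hm)
        rw [hNF] at h1
        have h2 : C.gen (↑F : Set R) ≤ C.gen ((G : Set R) ∪ {s}) := by
          apply C.gen_mono
          refine hFF₁.trans ?_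
          rintro x (hx | hx)
          · exact Or.inl (hF₁G hx)
          · exact Or.inr hx
        exact h2 h1
      exact C.mem_of_mem_gen_union hrad hdiv (C.gen_mem _) hmG hmsG
    · -- gen(Sg ∪ F₁) ≤ M
      apply C.gen_le hM
      rw [Finset.coe_union]
      exact Set.union_subset hSgM hF₁M
  -- Now deduce the ascending chain condition.
  intro f hf hmono
  have hchain : IsChain (· ≤ ·) (Set.range f) := by
    rintro _ ⟨m, rfl⟩ _ ⟨n, rfl⟩ _
    rcases le_total m n with h | h
    · exact Or.inl (hmono h)
    · exact Or.inr (hmono h)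
  have hU : sSup (Set.range f) ∈ C.carrier :=
    C.chain_sSup_mem _ (by rintro _ ⟨n, rfl⟩; exact hf n) (Set.range_nonempty f) hchain
  obtain ⟨Fs, hFs⟩ := key _ hU
  have hdir : DirectedOn (· ≤ ·) (Set.range f) := hchain.directedOn
  have hmem : ∀ x ∈ Fs, ∃ n : ℕ, x ∈ f n := by
    intro x hx
    have : x ∈ sSup (Set.range f) := by
      rw [hFs]
      exact C.subset_gen _ hx
    obtain ⟨_, ⟨n, rfl⟩, hn⟩ := (Submodule.mem_sSup_of_directed (Set.range_nonempty f) hdir).1 this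
    exact ⟨n, hn⟩
  have hbound : ∀ t : Finset R, (∀ x ∈ t, ∃ n : ℕ, x ∈ f n) → ∃ N : ℕ, ∀ x ∈ t, x ∈ f N := by
    classical
    intro t
    induction t using Finset.induction with
    | empty => exact fun _ => ⟨0, by simp⟩
    | insert _ _ hx IH =>
      rename_i a t
      intro h
      obtain ⟨N₁, hN₁⟩ := IH (fun x hxt => h x (Finset.mem_insert_of_mem hxt))
      obtain ⟨N₂, hN₂⟩ := h a (Finset.mem_insert_self a t)
      refine ⟨max N₁ N₂, ?_⟩
      intro x hxt
      rcases Finset.mem_insert.1 hxt with rfl | hxt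
      · exact hmono (le_max_right N₁ N₂) hN₂
      · exact hmono (le_max_left N₁ N₂) (hN₁ x hxt)
  obtain ⟨N, hN⟩ := hbound Fs hmem
  refine ⟨N, fun n hn => ?_⟩
  have h1 : f n ≤ sSup (Set.range f) := le_sSup ⟨n, rfl⟩
  have h2 : sSup (Set.range f) ≤ f N := by
    rw [hFs]
    exact C.gen_le (hf N) (fun x hx => hN x hx)
  exact le_antisymm (h1.trans h2) (hmono hn)
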